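/- There exist permutations σ₁, σ₂, σ₃ of {1, …, 28} such that σ₁ ∘ σ₂ ∘ σ₃ = id, the subgroup generated by σ₁, σ₂, σ₃ acts transitively on {1, …, 28}, and the multisets of orbit sizes of the cyclic groups generated by σ₁, σ₂, σ₃ are, respectively, {4,3,3,3,3,3,2,2,2,2,1}, {15,5,4,2,1,1}, and {11,7,4,3,3}. -/

import Mathlib

/-- The number of orbits of the cyclic group generated by a permutation `σ`
(i.e., the number of cycles of `σ`, counting fixed points as cycles of length 1). -/
noncomputable def cycleCount {α : Type*} [Finite α] (σ : Equiv.Perm α) : ℕ :=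
  Nat.card (MulAction.orbitRel.Quotient (Subgroup.zpowers σ) α)

/-- The multiset of sizes of the orbits of the cyclic group generated by a permutation `σ`
(i.e., the cycle type of `σ`, with fixed points contributing parts equal to 1). -/
noncomputable def orbitSizes {α : Type*} [Finite α] (σ : Equiv.Perm α) : Multiset ℕ :=
  letI := Fintype.ofFinite (MulAction.orbitRel.Quotient (Subgroup.zpowers σ) α)
  (Finset.univ : Finset (MulAction.orbitRel.Quotient (Subgroup.zpowers σ) α)).val.map
    fun q => Nat.card q.orbit

private def pf1 : Fin 28 → Fin 28 := ![26, 24, 0, 12, 18, 6, 5, 8, 25, 22, 21, 3, 11, 14, 13, 19, 17, 20, 10, 27, 16, 4, 9, 23, 1, 7, 2, 15]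
private def pg1 : Fin 28 → Fin 28 := ![2, 24, 26, 11, 21, 6, 5, 25, 7, 22, 18, 12, 3, 14, 13, 27, 20, 16, 4, 15, 17, 10, 9, 23, 1, 8, 0, 19]
private def s1 : Equiv.Perm (Fin 28) := ⟨pf1, pg1, by decide, by decide⟩

private def pf2 : Fin 28 → Fin 28 := ![15, 9, 19, 16, 8, 20, 12, 14, 4, 13, 17, 0, 18, 26, 10, 21, 5, 6, 24, 1, 3, 22, 11, 2, 23, 25, 7, 27]
private def pg2 : Fin 28 → Fin 28 := ![11, 19, 23, 20, 8, 16, 17, 26, 4, 1, 14, 22, 6, 9, 7, 0, 3, 10, 12, 2, 5, 15, 21, 24, 18, 25, 13, 27]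
private def s2 : Equiv.Perm (Fin 28) := ⟨pf2, pg2, by decide, by decide⟩

private def pf3 : Fin 28 → Fin 28 := ![23, 18, 13, 22, 15, 17, 16, 25, 26, 21, 12, 6, 20, 7, 9, 27, 5, 3, 8, 0, 10, 14, 1, 24, 19, 4, 11, 2]
private def pg3 : Fin 28 → Fin 28 := ![19, 22, 27, 17, 25, 16, 11, 13, 18, 14, 20, 26, 10, 2, 21, 4, 6, 5, 1, 24, 12, 9, 3, 0, 23, 7, 8, 15]
private def s3 : Equiv.Perm (Fin 28) := ⟨pf3, pg3, by decide, by decide⟩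

private def col1 : Fin 28 → ℕ := ![1, 6, 1, 2, 0, 7, 7, 3, 3, 8, 0, 2, 2, 9, 9, 4, 5, 5, 0, 4, 5, 0, 8, 10, 6, 3, 1, 4]
private def col2 : Fin 28 → ℕ := ![1, 0, 0, 2, 3, 2, 0, 0, 3, 0, 0, 1, 0, 0, 0, 1, 2, 0, 0, 0, 2, 1, 1, 0, 0, 4, 0, 5]
private def col3 : Fin 28 → ℕ := ![2, 0, 1, 0, 1, 0, 0, 1, 0, 3, 4, 0, 4, 1, 3, 1, 0, 0, 0, 2, 4, 3, 0, 2, 2, 1, 0, 1]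


private lemma minPeriodEq {α : Type*} (f : α → α) (x : α) (k : ℕ) (hk : 0 < k)
    (h1 : f^[k] x = x) (h2 : ∀ m, m < k → 0 < m → f^[m] x ≠ x) :
    Function.minimalPeriod f x = k := by
  have hper : Function.IsPeriodicPt f k x := h1
  have hle : Function.minimalPeriod f x ≤ k := hper.minimalPeriod_le hk
  have hpos : 0 < Function.minimalPeriod f x := hper.minimalPeriod_pos hk
  rcases lt_or_eq_of_le hle with h | h
  · exact absurd (Function.isPeriodicPt_minimalPeriod f x) (h2 _ h hpos)
  · exact h

private lemma cardOrbitZpowers {α : Type*} (σ : Equiv.Perm α) (x : α) :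
    Nat.card (MulAction.orbit (Subgroup.zpowers σ) x) = Function.minimalPeriod (fun y => σ y) x := by
  have h := Nat.card_congr (MulAction.orbitZPowersEquiv σ x)
  rw [Nat.card_zmod] at h
  exact h

private lemma univValEq {β : Type*} [Fintype β] (l : List β) (hn : l.Nodup)
    (hs : ∀ b : β, b ∈ l) : (Finset.univ : Finset β).val = ↑l := by
  have h : (⟨(↑l : Multiset β), hn⟩ : Finset β) = Finset.univ :=
    Finset.eq_univ_iff_forall.mpr hs
  exact (congrArg Finset.val h).symm

private lemma orbitSizesEq {α : Type*} [Fintype α] [DecidableEq α] (σ : Equiv.Perm α)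
    (N : ℕ) (reps : List α) (col : α → ℕ)
    (hcol : ∀ x, col (σ x) = col x)
    (hpair : reps.Pairwise fun a b => col a ≠ col b)
    (hcover : ∀ x, ∃ r ∈ reps, ∃ m, m < N ∧ (σ ^ m) r = x) :
    orbitSizes σ = ↑(reps.map fun r => Function.minimalPeriod (fun y => σ y) r) := by
  classical
  have hinv : ∀ x, col (σ⁻¹ x) = col x := fun x => by
    conv_rhs => rw [← (show σ (σ⁻¹ x) = x from σ.apply_symm_apply x)]
    rw [hcol]
  have hzcol : ∀ (i : ℤ) (x : α), col ((σ ^ i) x) = col x := by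
    intro i
    induction i using Int.induction_on with
    | zero => simp
    | succ k ih =>
      intro x
      rw [zpow_add_one, Equiv.Perm.mul_apply, ih, hcol]
    | pred k ih =>
      intro x
      rw [zpow_sub_one, Equiv.Perm.mul_apply, ih, hinv]
  set Q : α → MulAction.orbitRel.Quotient (Subgroup.zpowers σ) α := Quotient.mk'' with hQ
  have hrel : ∀ a b : α, Q a = Q b → ∃ i : ℤ, (σ ^ i) b = a := by
    intro a b hab
    have h := Quotient.exact' hab
    obtain ⟨⟨g, hg⟩, hgb⟩ := h
    obtain ⟨i, rfl⟩ := hg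
    exact ⟨i, hgb⟩
  have hnodup : (reps.map Q).Nodup := by
    refine List.Pairwise.map Q ?_ hpair
    intro a b h hab
    obtain ⟨i, hi⟩ := hrel a b hab
    exact h (hi ▸ hzcol i b)
  have hsurj : ∀ q : MulAction.orbitRel.Quotient (Subgroup.zpowers σ) α, q ∈ reps.map Q := by
    intro q
    induction q using Quotient.inductionOn' with
    | h x =>
      obtain ⟨r, hr, m, _, hm⟩ := hcover x
      refine List.mem_map.mpr ⟨r, hr, ?_⟩
      refine Quotient.sound' ?_
      refine ⟨⟨(σ ^ m)⁻¹, inv_mem (Subgroup.npow_mem_zpowers σ m)⟩, ?_⟩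
      show ((σ ^ m)⁻¹) x = r
      rw [← hm, (show (σ ^ m)⁻¹ ((σ ^ m) r) = r from (σ ^ m).symm_apply_apply r)]
  unfold orbitSizes
  have huniv : ∀ (inst : Fintype (MulAction.orbitRel.Quotient (Subgroup.zpowers σ) α)),
      (@Finset.univ _ inst).val = ↑(reps.map Q) :=
    fun inst => @univValEq _ inst _ hnodup hsurj
  rw [huniv _, Multiset.map_coe, List.map_map]
  congr 1
  refine List.map_congr_left ?_
  intro r _
  show Nat.card (Q r).orbit = _
  rw [hQ]
  rw [MulAction.orbitRel.Quotient.orbit_mk]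
  exact cardOrbitZpowers σ r

set_option maxRecDepth 100000 in
theorem realizable_triple_9 :
    ∃ σ₁ σ₂ σ₃ : Equiv.Perm (Fin 28),
      σ₁ * σ₂ * σ₃ = 1 ∧
      (∀ x y : Fin 28,
        ∃ g ∈ Subgroup.closure ({σ₁, σ₂, σ₃} : Set (Equiv.Perm (Fin 28))), g x = y) ∧
      orbitSizes σ₁ = ({4, 3, 3, 3, 3, 3, 2, 2, 2, 2, 1} : Multiset ℕ) ∧
      orbitSizes σ₂ = ({15, 5, 4, 2, 1, 1} : Multiset ℕ) ∧
      orbitSizes σ₃ = ({11, 7, 4, 3, 3} : Multiset ℕ) := by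
  refine ⟨s1, s2, s3, ?_, ?_, ?_, ?_, ?_⟩
  · exact Equiv.ext (by decide)
  · set H := Subgroup.closure ({s1, s2, s3} : Set (Equiv.Perm (Fin 28))) with hH
    have hs1 : s1 ∈ H := Subgroup.subset_closure (by simp)
    have hs2 : s2 ∈ H := Subgroup.subset_closure (by simp)
    set P : Fin 28 → Prop := fun y => ∃ g ∈ H, g 0 = y with hP
    have step1 : ∀ {y}, P y → P (s1 y) := by
      rintro y ⟨g, hg, hgy⟩
      exact ⟨s1 * g, mul_mem hs1 hg, by simp [Equiv.Perm.mul_apply, hgy]⟩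
    have step2 : ∀ {y}, P y → P (s2 y) := by
      rintro y ⟨g, hg, hgy⟩
      exact ⟨s2 * g, mul_mem hs2 hg, by simp [Equiv.Perm.mul_apply, hgy]⟩
    have h0 : P 0 := ⟨1, one_mem _, rfl⟩
    have h26 : P (26 : Fin 28) := step1 h0
    have h15 : P (15 : Fin 28) := step2 h0
    have h2 : P (2 : Fin 28) := step1 h26
    have h7 : P (7 : Fin 28) := step2 h26
    have h19 : P (19 : Fin 28) := step1 h15
    have h21 : P (21 : Fin 28) := step2 h15
    have h8 : P (8 : Fin 28) := step1 h7
    have h14 : P (14 : Fin 28) := step2 h7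
    have h27 : P (27 : Fin 28) := step1 h19
    have h1 : P (1 : Fin 28) := step2 h19
    have h4 : P (4 : Fin 28) := step1 h21
    have h22 : P (22 : Fin 28) := step2 h21
    have h25 : P (25 : Fin 28) := step1 h8
    have h13 : P (13 : Fin 28) := step1 h14
    have h10 : P (10 : Fin 28) := step2 h14
    have h24 : P (24 : Fin 28) := step1 h1
    have h9 : P (9 : Fin 28) := step2 h1
    have h18 : P (18 : Fin 28) := step1 h4
    have h11 : P (11 : Fin 28) := step2 h22
    have h17 : P (17 : Fin 28) := step2 h10
    have h23 : P (23 : Fin 28) := step2 h24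
    have h3 : P (3 : Fin 28) := step1 h11
    have h20 : P (20 : Fin 28) := step1 h17
    have h6 : P (6 : Fin 28) := step2 h17
    have h12 : P (12 : Fin 28) := step1 h3
    have h16 : P (16 : Fin 28) := step2 h3
    have h5 : P (5 : Fin 28) := step1 h6
    have hall : ∀ y : Fin 28, P y := by
      intro y
      fin_cases y <;> assumption
    intro x y
    obtain ⟨gx, hgx, hx⟩ := hall x
    obtain ⟨gy, hgy, hy⟩ := hall y
    refine ⟨gy * gx⁻¹, mul_mem hgy (inv_mem hgx), ?_⟩
    rw [Equiv.Perm.mul_apply, ← hx, (show gx⁻¹ (gx 0) = 0 from gx.symm_apply_apply 0), hy]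
  · have h := orbitSizesEq s1 28 [4, 0, 3, 7, 15, 16, 1, 5, 9, 13, 23] col1 (by decide) (by decide) (by decide)
    have q0 : Function.minimalPeriod (fun y => s1 y) (4 : Fin 28) = 4 :=
      minPeriodEq _ _ _ (by norm_num) (by decide) (by decide)
    have q1 : Function.minimalPeriod (fun y => s1 y) (0 : Fin 28) = 3 :=
      minPeriodEq _ _ _ (by norm_num) (by decide) (by decide)
    have q2 : Function.minimalPeriod (fun y => s1 y) (3 : Fin 28) = 3 :=
      minPeriodEq _ _ _ (by norm_num) (by decide) (by decide)
    have q3 : Function.minimalPeriod (fun y => s1 y) (7 : Fin 28) = 3 :=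
      minPeriodEq _ _ _ (by norm_num) (by decide) (by decide)
    have q4 : Function.minimalPeriod (fun y => s1 y) (15 : Fin 28) = 3 :=
      minPeriodEq _ _ _ (by norm_num) (by decide) (by decide)
    have q5 : Function.minimalPeriod (fun y => s1 y) (16 : Fin 28) = 3 :=
      minPeriodEq _ _ _ (by norm_num) (by decide) (by decide)
    have q6 : Function.minimalPeriod (fun y => s1 y) (1 : Fin 28) = 2 :=
      minPeriodEq _ _ _ (by norm_num) (by decide) (by decide)
    have q7 : Function.minimalPeriod (fun y => s1 y) (5 : Fin 28) = 2 :=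
      minPeriodEq _ _ _ (by norm_num) (by decide) (by decide)
    have q8 : Function.minimalPeriod (fun y => s1 y) (9 : Fin 28) = 2 :=
      minPeriodEq _ _ _ (by norm_num) (by decide) (by decide)
    have q9 : Function.minimalPeriod (fun y => s1 y) (13 : Fin 28) = 2 :=
      minPeriodEq _ _ _ (by norm_num) (by decide) (by decide)
    have q10 : Function.minimalPeriod (fun y => s1 y) (23 : Fin 28) = 1 :=
      minPeriodEq _ _ _ (by norm_num) (by decide) (by decide)
    rw [h]
    simp only [List.map_cons, List.map_nil, q0, q1, q2, q3, q4, q5, q6, q7, q8, q9, q10]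
    rfl
  · have h := orbitSizesEq s2 28 [1, 0, 3, 4, 25, 27] col2 (by decide) (by decide) (by decide)
    have q0 : Function.minimalPeriod (fun y => s2 y) (1 : Fin 28) = 15 :=
      minPeriodEq _ _ _ (by norm_num) (by decide) (by decide)
    have q1 : Function.minimalPeriod (fun y => s2 y) (0 : Fin 28) = 5 :=
      minPeriodEq _ _ _ (by norm_num) (by decide) (by decide)
    have q2 : Function.minimalPeriod (fun y => s2 y) (3 : Fin 28) = 4 :=
      minPeriodEq _ _ _ (by norm_num) (by decide) (by decide)
    have q3 : Function.minimalPeriod (fun y => s2 y) (4 : Fin 28) = 2 :=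
      minPeriodEq _ _ _ (by norm_num) (by decide) (by decide)
    have q4 : Function.minimalPeriod (fun y => s2 y) (25 : Fin 28) = 1 :=
      minPeriodEq _ _ _ (by norm_num) (by decide) (by decide)
    have q5 : Function.minimalPeriod (fun y => s2 y) (27 : Fin 28) = 1 :=
      minPeriodEq _ _ _ (by norm_num) (by decide) (by decide)
    rw [h]
    simp only [List.map_cons, List.map_nil, q0, q1, q2, q3, q4, q5]
    rfl
  · have h := orbitSizesEq s3 28 [1, 2, 0, 9, 10] col3 (by decide) (by decide) (by decide)
    have q0 : Function.minimalPeriod (fun y => s3 y) (1 : Fin 28) = 11 :=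
      minPeriodEq _ _ _ (by norm_num) (by decide) (by decide)
    have q1 : Function.minimalPeriod (fun y => s3 y) (2 : Fin 28) = 7 :=
      minPeriodEq _ _ _ (by norm_num) (by decide) (by decide)
    have q2 : Function.minimalPeriod (fun y => s3 y) (0 : Fin 28) = 4 :=
      minPeriodEq _ _ _ (by norm_num) (by decide) (by decide)
    have q3 : Function.minimalPeriod (fun y => s3 y) (9 : Fin 28) = 3 :=
      minPeriodEq _ _ _ (by norm_num) (by decide) (by decide)
    have q4 : Function.minimalPeriod (fun y => s3 y) (10 : Fin 28) = 3 :=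
      minPeriodEq _ _ _ (by norm_num) (by decide) (by decide)
    rw [h]
    simp only [List.map_cons, List.map_nil, q0, q1, q2, q3, q4]
    rfl
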